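/- Let A be a symmetric positive definite n×n matrix and h: ℝⁿ → ℝ a proper function. Then the weighted proximal operator satisfies prox_{αh}^A(x) = A^{-1/2} · prox_{αh∘A^{-1/2}}(A^{1/2} x), where prox_{αh}^A(x) = argmin_z (1/2)⟨z−x, A(z−x)⟩ + αh(z) and prox_{αh}(x) = argmin_z (1/2)‖z−x‖² + αh(z). -/

import Mathlib

open Matrix

namespace Matrix.PosSemidef

section

open scoped ComplexOrder

/-- The positive semidefinite square root of a positive semidefinite matrix
(definition from Mathlib of December 2024, removed since). -/
noncomputable def sqrt {n 𝕜 : Type*} [Fintype n] [RCLike 𝕜] [DecidableEq n]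
    {A : Matrix n n 𝕜} (hA : PosSemidef A) : Matrix n n 𝕜 :=
  hA.1.eigenvectorUnitary.1 * diagonal ((↑) ∘ (√·) ∘ hA.1.eigenvalues) *
  (star hA.1.eigenvectorUnitary : Matrix n n 𝕜)


theorem sqrt_mul_self {n 𝕜 : Type*} [Fintype n] [RCLike 𝕜] [DecidableEq n]
    {A : Matrix n n 𝕜} (hA : PosSemidef A) : hA.sqrt * hA.sqrt = A := by
  have hU : star (hA.1.eigenvectorUnitary : Matrix n n 𝕜) * hA.1.eigenvectorUnitary = 1 :=
    Unitary.star_mul_self_of_mem hA.1.eigenvectorUnitary.2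
  have hD : diagonal ((↑) ∘ (√·) ∘ hA.1.eigenvalues) * diagonal ((↑) ∘ (√·) ∘ hA.1.eigenvalues)
      = diagonal (RCLike.ofReal ∘ hA.1.eigenvalues : n → 𝕜) := by
    rw [diagonal_mul_diagonal]
    congr 1
    funext i
    simp only [Function.comp_apply]
    rw [← RCLike.ofReal_mul, Real.mul_self_sqrt (hA.eigenvalues_nonneg i)]
  conv_rhs => rw [hA.1.spectral_theorem]
  simp only [sqrt]
  rw [Unitary.conjStarAlgAut_apply]
  calc _ = (hA.1.eigenvectorUnitary : Matrix n n 𝕜) * (diagonal ((↑) ∘ (√·) ∘ hA.1.eigenvalues) *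
        (star (hA.1.eigenvectorUnitary : Matrix n n 𝕜) * (hA.1.eigenvectorUnitary : Matrix n n 𝕜)) *
        diagonal ((↑) ∘ (√·) ∘ hA.1.eigenvalues)) * star (hA.1.eigenvectorUnitary : Matrix n n 𝕜) := by
          simp only [Matrix.mul_assoc]
    _ = _ := by rw [hU, Matrix.mul_one, hD]

theorem sqrt_conjTranspose {n 𝕜 : Type*} [Fintype n] [RCLike 𝕜] [DecidableEq n]
    {A : Matrix n n 𝕜} (hA : PosSemidef A) : hA.sqrtᴴ = hA.sqrt := by
  have hd : star (RCLike.ofReal ∘ (√·) ∘ hA.1.eigenvalues : n → 𝕜)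
      = RCLike.ofReal ∘ (√·) ∘ hA.1.eigenvalues := by
    funext i
    simp
  simp only [sqrt, conjTranspose_mul, diagonal_conjTranspose, hd, Matrix.star_eq_conjTranspose,
    conjTranspose_conjTranspose, Matrix.mul_assoc]

end

end Matrix.PosSemidef

/-- The weighted proximal operator of a proper function `h` with respect to a symmetric
positive definite matrix `A` satisfies
`prox_{αh}^A(x) = A^{-1/2} · prox_{αh∘A^{-1/2}}(A^{1/2} x)`,
where each proximal point is assumed to exist and be the unique minimizer. -/
theorem stmt_0 (n : ℕ) (A : Matrix (Fin n) (Fin n) ℝ) (hA : A.PosDef)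
    (h : (Fin n → ℝ) → ℝ) (α : ℝ) (hα : 0 < α) (x p q : Fin n → ℝ)
    -- `p` is the unique minimizer of `z ↦ (1/2)⟨z−x, A(z−x)⟩ + αh(z)`
    (hp : ∀ z, z ≠ p →
      (1/2) * ((p - x) ⬝ᵥ (A *ᵥ (p - x))) + α * h p <
      (1/2) * ((z - x) ⬝ᵥ (A *ᵥ (z - x))) + α * h z)
    -- `q` is the unique minimizer of `z ↦ (1/2)‖z − A^{1/2}x‖² + αh(A^{-1/2}z)`
    (hq : ∀ z, z ≠ q →
      (1/2) * ((q - hA.posSemidef.sqrt *ᵥ x) ⬝ᵥ (q - hA.posSemidef.sqrt *ᵥ x)) +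
        α * h ((hA.posSemidef.sqrt)⁻¹ *ᵥ q) <
      (1/2) * ((z - hA.posSemidef.sqrt *ᵥ x) ⬝ᵥ (z - hA.posSemidef.sqrt *ᵥ x)) +
        α * h ((hA.posSemidef.sqrt)⁻¹ *ᵥ z)) :
    p = (hA.posSemidef.sqrt)⁻¹ *ᵥ q := by
  set S := hA.posSemidef.sqrt with hS
  have hdet : IsUnit S.det := by
    have h2 : S.det * S.det = A.det := by
      rw [← det_mul, hA.posSemidef.sqrt_mul_self]
    have : A.det ≠ 0 := ne_of_gt hA.det_pos
    exact isUnit_iff_ne_zero.mpr (fun h0 => this (by rw [← h2, h0, zero_mul]))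
  have hinvS : S⁻¹ * S = 1 := nonsing_inv_mul S hdet
  have hSinv : S * S⁻¹ = 1 := mul_nonsing_inv S hdet
  have hcancel : ∀ z : Fin n → ℝ, S⁻¹ *ᵥ (S *ᵥ z) = z := fun z => by
    rw [mulVec_mulVec, hinvS, one_mulVec]
  have hcancel' : S *ᵥ (S⁻¹ *ᵥ q) = q := by
    rw [mulVec_mulVec, hSinv, one_mulVec]
  have hsym : Sᵀ = S := by
    rw [← conjTranspose_eq_transpose_of_trivial]; exact hA.posSemidef.sqrt_conjTranspose
  -- key: quadratic forms agree
  have hquad : ∀ z : Fin n → ℝ,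
      (z - x) ⬝ᵥ (A *ᵥ (z - x)) = (S *ᵥ z - S *ᵥ x) ⬝ᵥ (S *ᵥ z - S *ᵥ x) := by
    intro z
    have : S *ᵥ z - S *ᵥ x = S *ᵥ (z - x) := (mulVec_sub S z x).symm
    rw [this, ← hA.posSemidef.sqrt_mul_self, ← hS, ← mulVec_mulVec,
      dotProduct_mulVec (z - x) S, ← mulVec_transpose, hsym]
  by_contra hne
  have hq_ne : S *ᵥ p ≠ q := by
    intro heq
    apply hne
    rw [← heq, hcancel]
  have h1 := hp (S⁻¹ *ᵥ q) fun heq => hne heq.symm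
  have h2 := hq (S *ᵥ p) hq_ne
  rw [hquad p, hquad (S⁻¹ *ᵥ q), hcancel'] at h1
  rw [hcancel p] at h2
  linarith [h1, h2]
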